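/- Given a weighted Kripke model M = (W, E, C, β) satisfying positivity and symmetry, and any formula χ, the model M_χ^+ = (W, E_χ^+, C, β) obtained by augmenting the edge function with group labels and their path-closure is again a weighted Kripke model (E_χ^+ remains symmetric and satisfies positivity), and the truth of every formula φ not mentioning the added group labels is preserved: M,w ⊨ φ iff M_χ^+, w ⊨ φ for all worlds w. -/

import Mathlib

/-- A weighted Kripke model. -/
structure WKModel (W A S P : Type) where
  ne : Nonempty W
  E : W → W → Set S
  C : A → Set S
  val : W → Set P
  symm : ∀ w u, E w u = E u w
  pos : ∀ w u, E w u = Set.univ → w = u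


/-- Formulas of the language `L_CDEF`: atoms, falsum, negation, implication, individual
knowledge `K a`, common knowledge `Ck G`, mutual knowledge `Ek G`, distributed knowledge
`Dk G` and field knowledge `Fk G`. -/
inductive Form (P A : Type) where
  | atom : P → Form P A
  | bot : Form P A
  | neg : Form P A → Form P A
  | impl : Form P A → Form P A → Form P A
  | K : A → Form P A → Form P A
  | Ck : Finset A → Form P A → Form P A
  | Ek : Finset A → Form P A → Form P A
  | Dk : Finset A → Form P A → Form P A
  | Fk : Finset A → Form P A → Form P A

/-- One step of a `G`-path. -/
def gstep {W A S P : Type} (M : WKModel W A S P) (G : Finset A) (w u : W) : Prop :=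
  ∃ a ∈ G, M.C a ⊆ M.E w u

/-- Satisfaction in a weighted Kripke model (common knowledge via `G`-paths). -/
def sat {W A S P : Type} (M : WKModel W A S P) : Form P A → W → Prop
  | .atom p, w => p ∈ M.val w
  | .bot, _ => False
  | .neg φ, w => ¬ sat M φ w
  | .impl φ ψ, w => sat M φ w → sat M ψ w
  | .K a φ, w => ∀ u, M.C a ⊆ M.E w u → sat M φ u
  | .Ck G φ, w => ∀ u, Relation.TransGen (gstep M G) w u → sat M φ u
  | .Ek G φ, w => ∀ a ∈ G, ∀ u, M.C a ⊆ M.E w u → sat M φ u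
  | .Dk G φ, w => ∀ u, (⋃ a ∈ G, M.C a) ⊆ M.E w u → sat M φ u
  | .Fk G φ, w => ∀ u, (⋂ a ∈ G, M.C a) ⊆ M.E w u → sat M φ u

/-- `A_χ`: the set of groups `G` such that `E_G` or `C_G` appears in `χ`. -/
def egroups {P A : Type} : Form P A → Set (Finset A)
  | .atom _ => ∅
  | .bot => ∅
  | .neg φ => egroups φ
  | .impl φ ψ => egroups φ ∪ egroups ψ
  | .K _ φ => egroups φ
  | .Ck G φ => insert G (egroups φ)
  | .Ek G φ => insert G (egroups φ)
  | .Dk _ φ => egroups φ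
  | .Fk _ φ => egroups φ

/-- `E_χ`: augment the edge function with group labels (groups are treated as fresh skills,
realized by the sum type `S ⊕ Finset A`). -/
def Echi {W A S P : Type} (M : WKModel W A (S ⊕ Finset A) P) (χ : Form P A) (w u : W) :
    Set (S ⊕ Finset A) :=
  M.E w u ∪ {s | ∃ G ∈ egroups χ, s = Sum.inr G ∧ ∃ a ∈ G, M.C a ⊆ M.E w u}

/-- `E_χ⁺`: additionally close the group labels under paths. -/
def EchiPlus {W A S P : Type} (M : WKModel W A (S ⊕ Finset A) P) (χ : Form P A) (w u : W) :
    Set (S ⊕ Finset A) :=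
  Echi M χ w u ∪
    {s | ∃ G ∈ egroups χ, s = Sum.inr G ∧
      ∃ n : ℕ, 1 ≤ n ∧ ∃ f : ℕ → W, f 0 = w ∧ f n = u ∧
        ∀ i < n, Sum.inr G ∈ Echi M χ (f i) (f (i + 1))}

section Aux

variable {W A S P : Type} (M : WKModel W A (S ⊕ Finset A) P) (χ : Form P A)

lemma Echi_symm (w u : W) : Echi M χ w u = Echi M χ u w := by
  unfold Echi; rw [M.symm w u]

lemma inr_empty_not_mem_Echi
    (hE : ∀ (w u : W) (G : Finset A), Sum.inr G ∉ M.E w u) (w u : W) :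
    Sum.inr (∅ : Finset A) ∉ Echi M χ w u := by
  rintro (h | ⟨G, _, hGe, a, ha, _⟩)
  · exact hE w u ∅ h
  · rw [Sum.inr.injEq] at hGe; subst hGe; exact Finset.notMem_empty a ha

lemma inr_empty_not_mem_EchiPlus
    (hE : ∀ (w u : W) (G : Finset A), Sum.inr G ∉ M.E w u) (w u : W) :
    Sum.inr (∅ : Finset A) ∉ EchiPlus M χ w u := by
  rintro (h | ⟨G, _, hGe, n, hn, f, _, _, hstep⟩)
  · exact inr_empty_not_mem_Echi M χ hE w u h
  · rw [Sum.inr.injEq] at hGe; subst hGe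
    exact inr_empty_not_mem_Echi M χ hE _ _ (hstep 0 (by omega))

lemma EchiPlus_symm (w u : W) : EchiPlus M χ w u = EchiPlus M χ u w := by
  have key : ∀ w u : W, EchiPlus M χ w u ⊆ EchiPlus M χ u w := by
    intro w u s hs
    rcases hs with h | ⟨G, hG, hGe, n, hn, f, hf0, hfn, hstep⟩
    · exact Or.inl ((Echi_symm M χ w u) ▸ h)
    · refine Or.inr ⟨G, hG, hGe, n, hn, fun i => f (n - i), by simp [hfn], by simp [hf0], ?_⟩
      intro i hi
      have h1 : n - (i + 1) + 1 = n - i := by omega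
      have h2 : n - (i + 1) < n := by omega
      have := hstep (n - (i + 1)) h2
      rw [h1] at this
      rw [Echi_symm]
      exact this
  exact Set.Subset.antisymm (key w u) (key u w)

lemma EchiPlus_pos
    (hE : ∀ (w u : W) (G : Finset A), Sum.inr G ∉ M.E w u) (w u : W) :
    EchiPlus M χ w u = Set.univ → w = u := by
  intro h
  exact absurd (h ▸ Set.mem_univ (Sum.inr (∅ : Finset A)))
    (inr_empty_not_mem_EchiPlus M χ hE w u)

lemma subset_EchiPlus_iff
    (hE : ∀ (w u : W) (G : Finset A), Sum.inr G ∉ M.E w u)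
    (X : Set (S ⊕ Finset A)) (hX : ∀ G : Finset A, Sum.inr G ∉ X) (w u : W) :
    X ⊆ EchiPlus M χ w u ↔ X ⊆ M.E w u := by
  constructor
  · intro h x hx
    rcases h hx with (h' | ⟨G, _, hGe, _⟩) | ⟨G, _, hGe, _⟩
    · exact h'
    · exact absurd (hGe ▸ hx) (hX G)
    · exact absurd (hGe ▸ hx) (hX G)
  · exact fun h x hx => Or.inl (Or.inl (h hx))

end Aux

/-- `M_χ⁺ = (W, E_χ⁺, C, β)` is again a weighted Kripke model, and truth of every formula
(which never mentions the added group labels) is preserved.  The freshness hypotheses say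
that no group label occurs in the original edge function or in any capability set. -/
theorem augmented_model_is_model_and_preserves_truth {W A S P : Type}
    (M : WKModel W A (S ⊕ Finset A) P) (χ : Form P A)
    (hE : ∀ (w u : W) (G : Finset A), Sum.inr G ∉ M.E w u)
    (hC : ∀ (a : A) (G : Finset A), Sum.inr G ∉ M.C a) :
    ∃ (hs : ∀ w u, EchiPlus M χ w u = EchiPlus M χ u w)
      (hp : ∀ w u, EchiPlus M χ w u = Set.univ → w = u),
      ∀ (φ : Form P A) (w : W),
        sat M φ w ↔ sat ⟨M.ne, EchiPlus M χ, M.C, M.val, hs, hp⟩ φ w := by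
  refine ⟨EchiPlus_symm M χ, EchiPlus_pos M χ hE, ?_⟩
  set M' : WKModel W A (S ⊕ Finset A) P :=
    ⟨M.ne, EchiPlus M χ, M.C, M.val, EchiPlus_symm M χ, EchiPlus_pos M χ hE⟩ with hM'
  have hsub : ∀ (a : A) (w u : W), M.C a ⊆ EchiPlus M χ w u ↔ M.C a ⊆ M.E w u :=
    fun a w u => subset_EchiPlus_iff M χ hE (M.C a) (hC a) w u
  intro φ
  induction φ with
  | atom p => intro w; exact Iff.rfl
  | bot => intro w; exact Iff.rfl
  | neg φ ih => intro w; exact not_congr (ih w)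
  | impl φ ψ ih1 ih2 => intro w; exact imp_congr (ih1 w) (ih2 w)
  | K a φ ih =>
    intro w
    exact forall_congr' fun u => imp_congr (hsub a w u).symm (ih u)
  | Ck G φ ih =>
    intro w
    have hg : ∀ w u : W, gstep M' G w u ↔ gstep M G w u := by
      intro w u
      exact exists_congr fun a => and_congr Iff.rfl (hsub a w u)
    have ht : ∀ u, Relation.TransGen (gstep M G) w u ↔ Relation.TransGen (gstep M' G) w u :=
      fun u => ⟨Relation.TransGen.mono (fun a b h => (hg a b).2 h) w u,
        Relation.TransGen.mono (fun a b h => (hg a b).1 h) w u⟩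
    exact forall_congr' fun u => imp_congr (ht u) (ih u)
  | Ek G φ ih =>
    intro w
    exact forall_congr' fun a => forall_congr' fun _ => forall_congr' fun u =>
      imp_congr (hsub a w u).symm (ih u)
  | Dk G φ ih =>
    intro w
    have hX : ∀ H : Finset A, Sum.inr H ∉ ⋃ a ∈ G, M.C a := by
      intro H hmem
      simp only [Set.mem_iUnion] at hmem
      obtain ⟨a, _, ha⟩ := hmem
      exact hC a H ha
    exact forall_congr' fun u =>
      imp_congr (subset_EchiPlus_iff M χ hE _ hX w u).symm (ih u)
  | Fk G φ ih =>
    intro w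
    rcases G.eq_empty_or_nonempty with rfl | ⟨a, ha⟩
    · have h1 : ∀ u : W, ¬ ((⋂ a ∈ (∅ : Finset A), M.C a) ⊆ M.E w u) := by
        intro u h
        simp only [Finset.notMem_empty, Set.iInter_of_empty, Set.iInter_univ] at h
        exact hE w u ∅ (h (Set.mem_univ _))
      have h2 : ∀ u : W, ¬ ((⋂ a ∈ (∅ : Finset A), M.C a) ⊆ EchiPlus M χ w u) := by
        intro u h
        simp only [Finset.notMem_empty, Set.iInter_of_empty, Set.iInter_univ] at h
        exact inr_empty_not_mem_EchiPlus M χ hE w u (h (Set.mem_univ _))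
      exact forall_congr' fun u =>
        ⟨fun _ h => absurd h (h2 u), fun _ h => absurd h (h1 u)⟩
    · have hX : ∀ H : Finset A, Sum.inr H ∉ ⋂ a ∈ G, M.C a := by
        intro H hmem
        simp only [Set.mem_iInter] at hmem
        exact hC a H (hmem a ha)
      exact forall_congr' fun u =>
        imp_congr (subset_EchiPlus_iff M χ hE _ hX w u).symm (ih u)
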